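/- Angular integral over the collision hemisphere: for every nonzero w ∈ ℝ³, every Ξ ≥ 0 and every c₀ > 0, ∫_{{ε ∈ 𝕊² : ⟨ε, w⟩ > 0}} Θ(c₀⟨ε, w⟩ − Ξ) ⟨ε, w⟩ dε = π ‖w‖ Θ(‖w‖ − Ξ/c₀) [1 − (Ξ/(c₀‖w‖))²], where the integral is taken with respect to the surface measure of the unit sphere in ℝ³. -/

import Mathlib

open MeasureTheory
open scoped RealInnerProductSpace

noncomputable section

abbrev E3 := EuclideanSpace ℝ (Fin 3)

/-- The surface measure of the unit sphere of `ℝ³`, viewed as a measure on `ℝ³`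
(the pushforward along the inclusion of the sphere). -/
def sphMeasure : Measure E3 :=
  Measure.map Subtype.val (volume : Measure E3).toSphere

/-- The Heaviside step function: `1` on `[0, ∞)`, `0` on `(−∞, 0)`. -/
def heav (x : ℝ) : ℝ := if 0 ≤ x then 1 else 0

/-- Product measure `dv ⊗ dw ⊗ dε` on `ℝ³ × ℝ³ × 𝕊²`. -/
def μ3 : Measure (E3 × E3 × E3) := (volume : Measure E3).prod ((volume : Measure E3).prod sphMeasure)

/-- Product measure `dw ⊗ dε` on `ℝ³ × 𝕊²`. -/
def μ2 : Measure (E3 × E3) := (volume : Measure E3).prod sphMeasure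

/-- Reduced mass. -/
def rmass (a b : ℝ) : ℝ := a * b / (a + b)

/-- Elastic post-collisional velocity of the first particle. -/
def vpost (mi ms : ℝ) (vi vs ε : E3) : E3 :=
  vi - (2 * (rmass mi ms / mi) * ⟪ε, vi - vs⟫) • ε

/-- Elastic post-collisional velocity of the second particle. -/
def vpost' (mi ms : ℝ) (vi vs ε : E3) : E3 :=
  vs + (2 * (rmass mi ms / ms) * ⟪ε, vi - vs⟫) • ε

/-- Reactive post-collisional velocity `v_k°`. -/
def vko (mi mj mk ml Q : ℝ) (vi vj ε : E3) : E3 :=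
  (1 / (mi + mj)) • (mi • vi + mj • vj +
    (ml * Real.sqrt (rmass mi mj / rmass mk ml)) •
      ((vi - vj) - ⟪ε, vi - vj⟫ • ε +
        Real.sqrt (⟪ε, vi - vj⟫ ^ 2 - 2 * Q / rmass mi mj) • ε))

/-- Reactive post-collisional velocity `v_l°`. -/
def vlo (mi mj mk ml Q : ℝ) (vi vj ε : E3) : E3 :=
  (1 / (mi + mj)) • (mi • vi + mj • vj -
    (mk * Real.sqrt (rmass mi mj / rmass mk ml)) •
      ((vi - vj) - ⟪ε, vi - vj⟫ • ε +
        Real.sqrt (⟪ε, vi - vj⟫ ^ 2 - 2 * Q / rmass mi mj) • ε))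

/-- Integrand of a (bi- or mono-species) elastic collision operator; it is set to `0` off
the collision hemisphere `⟨ε, v_i − v_s⟩ > 0`, so that integration of this kernel over the
whole sphere coincides with integration over the hemisphere `𝕊²₊(v_i − v_s)`. -/
def elK (σ mi ms : ℝ) (fi fs : E3 → ℝ) (vi vs ε : E3) : ℝ :=
  if 0 < ⟪ε, vi - vs⟫ then
    σ ^ 2 * (fi (vpost mi ms vi vs ε) * fs (vpost' mi ms vi vs ε) - fi vi * fs vs) *
      ⟪ε, vi - vs⟫
  else 0

/-- Integrand of the correction operator `J_ij^{b*E}` (`0` off the collision hemisphere). -/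
def corrK (σ β Ξ mi mj : ℝ) (fi fj : E3 → ℝ) (vi vj ε : E3) : ℝ :=
  if 0 < ⟪ε, vi - vj⟫ then
    β * σ ^ 2 * (fi (vpost mi mj vi vj ε) * fj (vpost' mi mj vi vj ε) - fi vi * fj vj) *
      heav (⟪ε, vi - vj⟫ - Ξ) * ⟪ε, vi - vj⟫
  else 0

/-- Integrand of the reactive operator `J_i^R` (`0` off the collision hemisphere). -/
def reK (σ β Ξ mi mj mk ml Q : ℝ) (fi fj fk fl : E3 → ℝ) (vi vj ε : E3) : ℝ :=
  if 0 < ⟪ε, vi - vj⟫ then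
    β * σ ^ 2 *
      ((rmass mi mj / rmass mk ml) ^ 2 * fk (vko mi mj mk ml Q vi vj ε) *
          fl (vlo mi mj mk ml Q vi vj ε) - fi vi * fj vj) *
      heav (⟪ε, vi - vj⟫ - Ξ) * ⟪ε, vi - vj⟫
  else 0

/-- The collision operator associated with a kernel: integrate over the partner velocity and
over the sphere. -/
def colOp (K : E3 → E3 → E3 → ℝ) (vi : E3) : ℝ :=
  ∫ vs, ∫ ε, K vi vs ε ∂sphMeasure ∂volume

/-! ### Auxiliary lemmas for the angular integral -/

section AngularAux
open Set Metric Real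
open scoped ENNReal NNReal

lemma heav_nonneg (x : ℝ) : 0 ≤ heav x := by unfold heav; split_ifs <;> norm_num

lemma heav_of_nonneg {x : ℝ} (h : 0 ≤ x) : heav x = 1 := if_pos h

lemma heav_of_neg {x : ℝ} (h : x < 0) : heav x = 0 := if_neg (not_le.mpr h)

lemma heav_mul_pos {r : ℝ} (hr : 0 < r) (a : ℝ) : heav (r * a) = heav a := by
  unfold heav
  congr 1
  simp [mul_nonneg_iff_of_pos_left hr]

lemma measurable_heav : Measurable heav := by
  have : heav = Set.indicator (Ici (0:ℝ)) (fun _ => 1) := by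
    ext x; simp [heav, Set.indicator, mem_Ici]
  rw [this]; exact measurable_const.indicator measurableSet_Ici

/-- heaviside radial weight on `(0,1]` with total cubic mass one. -/
def radW (r : ℝ) : ℝ≥0∞ := if r ∈ Ioc (0:ℝ) 1 then 4 else 0

lemma measurable_radW : Measurable radW :=
  Measurable.ite measurableSet_Ioc measurable_const measurable_const

lemma radW_norm :
    ∫⁻ r in Ioi (0:ℝ), ENNReal.ofReal (r ^ 2) * (ENNReal.ofReal r * radW r) = 1 := by
  have hcongr : ∀ r ∈ Ioi (0:ℝ),
      ENNReal.ofReal (r ^ 2) * (ENNReal.ofReal r * radW r)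
        = (Ioc (0:ℝ) 1).indicator (fun r => ENNReal.ofReal (4 * r ^ 3)) r := by
    intro r hr
    simp only [radW, Set.indicator]
    by_cases h1 : r ∈ Ioc (0:ℝ) 1
    · rw [if_pos h1, if_pos h1]
      rw [show (4:ℝ≥0∞) = ENNReal.ofReal 4 by norm_num,
        ← ENNReal.ofReal_mul h1.1.le, ← ENNReal.ofReal_mul (sq_nonneg r)]
      ring_nf
    · rw [if_neg h1, if_neg h1, mul_zero, mul_zero]
  rw [setLIntegral_congr_fun measurableSet_Ioi
    hcongr]
  rw [lintegral_indicator measurableSet_Ioc, Measure.restrict_restrict measurableSet_Ioc,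
    Set.inter_eq_self_of_subset_left Ioc_subset_Ioi_self]
  rw [← ofReal_integral_eq_lintegral_ofReal]
  · rw [← intervalIntegral.integral_of_le zero_le_one, intervalIntegral.integral_const_mul,
      integral_pow]
    norm_num
  · exact (continuous_const.mul (continuous_pow 3)).integrableOn_Ioc
  · filter_upwards [ae_restrict_mem measurableSet_Ioc] with r hr
    have := hr.1
    positivity

lemma disk_vol (m : ℝ) : (volume : Measure (Fin 2 → ℝ)) {z | z 0 ^ 2 + z 1 ^ 2 ≤ m}
    = ENNReal.ofReal (π * m) := by
  have hmeas : MeasurableSet {z : Fin 2 → ℝ | z 0 ^ 2 + z 1 ^ 2 ≤ m} := by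
    apply measurableSet_le <;> fun_prop
  have h1 := (EuclideanSpace.volume_preserving_symm_measurableEquiv_toLp (Fin 2)).measure_preimage
    hmeas.nullMeasurableSet
  have hpre : (MeasurableEquiv.toLp 2 (Fin 2 → ℝ)).symm ⁻¹' {z : Fin 2 → ℝ | z 0 ^ 2 + z 1 ^ 2 ≤ m}
      = {x : EuclideanSpace ℝ (Fin 2) | x 0 ^ 2 + x 1 ^ 2 ≤ m} := rfl
  rw [hpre] at h1
  rcases lt_or_ge m 0 with hm | hm
  · have : {x : EuclideanSpace ℝ (Fin 2) | x 0 ^ 2 + x 1 ^ 2 ≤ m} = ∅ := by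
      ext x; simp only [mem_setOf_eq, mem_empty_iff_false, iff_false]
      intro h; nlinarith [sq_nonneg (x 0), sq_nonneg (x 1)]
    rw [this] at h1
    rw [← h1, measure_empty, Eq.comm, ENNReal.ofReal_eq_zero]
    nlinarith [Real.pi_pos]
  · have hball : {x : EuclideanSpace ℝ (Fin 2) | x 0 ^ 2 + x 1 ^ 2 ≤ m}
        = Metric.closedBall 0 (Real.sqrt m) := by
      ext x
      have hx : ‖x‖ ^ 2 = x 0 ^ 2 + x 1 ^ 2 := by
        rw [EuclideanSpace.norm_eq, Real.sq_sqrt (by positivity)]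
        simp [Fin.sum_univ_two, sq_abs]
      simp only [mem_setOf_eq, Metric.mem_closedBall, dist_zero_right]
      rw [← hx, ← Real.sqrt_le_sqrt_iff (by positivity), Real.sqrt_sq (norm_nonneg x)]
    rw [hball] at h1
    rw [← h1, EuclideanSpace.volume_closedBall]
    have : (Fintype.card (Fin 2)) = 2 := by simp
    rw [this, show ((2:ℕ) : ℝ) / 2 + 1 = 2 by norm_num, Real.Gamma_two,
      ← ENNReal.ofReal_pow (Real.sqrt_nonneg m), ← ENNReal.ofReal_mul (by positivity)]
    congr 1
    rw [Real.sq_sqrt hm, Real.sq_sqrt Real.pi_nonneg]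
    ring

lemma polar3 (Φ : E3 → ℝ≥0∞) (hΦ : Measurable Φ) :
    ∫⁻ x, Φ x = ∫⁻ p : sphere (0:E3) 1 × Ioi (0:ℝ), Φ (p.2.1 • p.1.1)
      ∂((volume : Measure E3).toSphere.prod (Measure.volumeIoiPow 2)) := by
  have hd : Module.finrank ℝ E3 = 3 := finrank_euclideanSpace_fin
  have h1 := (volume : Measure E3).measurePreserving_homeomorphUnitSphereProd
  rw [hd] at h1
  have h2 : Measurable fun p : sphere (0:E3) 1 × Ioi (0:ℝ) => Φ (p.2.1 • p.1.1) := by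
    fun_prop
  have h3 := h1.lintegral_comp h2
  have h4 : ∀ x : ({(0:E3)}ᶜ : Set E3),
      Φ (((homeomorphUnitSphereProd E3) x).2.1 • ((homeomorphUnitSphereProd E3) x).1.1) = Φ x := by
    intro x
    simp only [homeomorphUnitSphereProd_apply_snd_coe, homeomorphUnitSphereProd_apply_fst_coe]
    rw [smul_inv_smul₀ (norm_ne_zero_iff.2 x.2)]
  simp only [h4] at h3
  rw [← h3, lintegral_subtype_comap (measurableSet_singleton _).compl,
    restrict_compl_singleton]

lemma lintegral_volumeIoiPow (n : ℕ) (G : ℝ → ℝ≥0∞) (hG : Measurable G) :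
    ∫⁻ r : Ioi (0:ℝ), G r ∂(Measure.volumeIoiPow n)
      = ∫⁻ r in Ioi (0:ℝ), ENNReal.ofReal (r ^ n) * G r := by
  rw [Measure.volumeIoiPow, lintegral_withDensity_eq_lintegral_mul _ (by fun_prop) (by fun_prop)]
  rw [← lintegral_subtype_comap measurableSet_Ioi]
  rfl


def mfun (Ξ K t : ℝ) : ℝ :=
  if Ξ = 0 then 1 - t ^ 2 else min (1 - t ^ 2) ((K / Ξ) ^ 2 * t ^ 2 - t ^ 2)

lemma inner_eval (b K Ξ t : ℝ) (hb : 0 < b) (hK : 0 < K) (hΞ : 0 ≤ Ξ) :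
    (∫⁻ z : Fin 2 → ℝ,
      ENNReal.ofReal (if 0 < b * t then
          heav (K * t - Ξ * Real.sqrt (t ^ 2 + (z 0 ^ 2 + z 1 ^ 2))) * (b * t) else 0)
        * radW (Real.sqrt (t ^ 2 + (z 0 ^ 2 + z 1 ^ 2))))
    = if 0 < t then ENNReal.ofReal (b * t) * (4 * ENNReal.ofReal (π * mfun Ξ K t)) else 0 := by
  by_cases ht : 0 < t
  · rw [if_pos ht]
    have hD : MeasurableSet {z : Fin 2 → ℝ | z 0 ^ 2 + z 1 ^ 2 ≤ mfun Ξ K t} := by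
      apply measurableSet_le <;> fun_prop
    have hpt : ∀ z : Fin 2 → ℝ,
        ENNReal.ofReal (if 0 < b * t then
            heav (K * t - Ξ * Real.sqrt (t ^ 2 + (z 0 ^ 2 + z 1 ^ 2))) * (b * t) else 0)
          * radW (Real.sqrt (t ^ 2 + (z 0 ^ 2 + z 1 ^ 2)))
        = (ENNReal.ofReal (b * t) * 4) *
            ({z : Fin 2 → ℝ | z 0 ^ 2 + z 1 ^ 2 ≤ mfun Ξ K t}).indicator
              (fun _ => (1:ℝ≥0∞)) z := by
      intro z
      rw [if_pos (mul_pos hb ht)]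
      set S := z 0 ^ 2 + z 1 ^ 2 with hSdef
      have hS0 : 0 ≤ S := by positivity
      set n := Real.sqrt (t ^ 2 + S) with hndef
      have hn0 : 0 < n := Real.sqrt_pos.mpr (by nlinarith)
      have hsq : n ^ 2 = t ^ 2 + S := Real.sq_sqrt (by positivity)
      have h1 : n ≤ 1 ↔ S ≤ 1 - t ^ 2 := by
        constructor
        · intro h; nlinarith
        · intro h
          have h' : n ≤ Real.sqrt 1 := by
            rw [hndef]; exact Real.sqrt_le_sqrt (by linarith)
          simpa using h'
      have h2 : Ξ * n ≤ K * t ↔ (Ξ = 0 ∨ S ≤ (K / Ξ) ^ 2 * t ^ 2 - t ^ 2) := by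
        rcases eq_or_lt_of_le hΞ with hΞ0 | hΞpos
        · constructor
          · intro _; exact Or.inl hΞ0.symm
          · intro _
            rw [← hΞ0, zero_mul]
            positivity
        · have hKt : 0 < K * t / Ξ := by positivity
          have : Ξ * n ≤ K * t ↔ n ≤ K * t / Ξ := by
            rw [le_div_iff₀ hΞpos]; constructor <;> intro h <;> nlinarith
          have hrw : (K * t / Ξ) ^ 2 = (K / Ξ) ^ 2 * t ^ 2 := by ring
          rw [this, hndef, ← Real.sqrt_sq hKt.le,
            Real.sqrt_le_sqrt_iff (by positivity)]
          constructor
          · intro h; right; linarith [hrw ▸ h]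
          · rintro (h | h)
            · exact absurd h.symm (ne_of_lt hΞpos)
            · rw [hrw]; linarith
      have hcomb : (Ξ * n ≤ K * t ∧ n ≤ 1) ↔ S ≤ mfun Ξ K t := by
        unfold mfun
        split_ifs with hΞ0
        · rw [h1, h2, hΞ0]; tauto
        · rw [h1, h2, le_min_iff]; tauto
      by_cases hc : S ≤ mfun Ξ K t
      · obtain ⟨hh, hn1⟩ := hcomb.mpr hc
        rw [heav_of_nonneg (by linarith), one_mul]
        have hrW : radW n = 4 := if_pos ⟨hn0, hn1⟩
        rw [hrW, Set.indicator_of_mem (by exact hc), mul_one]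
      · rw [Set.indicator_of_notMem (by exact hc), mul_zero]
        rcases not_and_or.mp (fun h => hc (hcomb.mp h)) with h | h
        · rw [heav_of_neg (by linarith [not_le.mp h]), zero_mul]
          simp
        · have hrW : radW n = 0 := if_neg (fun hmem => h hmem.2)
          rw [hrW, mul_zero]
    rw [lintegral_congr hpt, lintegral_const_mul _ (measurable_const.indicator hD),
      lintegral_indicator hD, setLIntegral_one, disk_vol]
    ring
  · have hbt : b * t ≤ 0 := mul_nonpos_of_nonneg_of_nonpos hb.le (not_lt.mp ht)
    simp [if_neg ht, if_neg (not_lt.mpr hbt)]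

lemma outer_eval (b K Ξ : ℝ) (hb : 0 < b) (hK : 0 < K) (hΞ : 0 ≤ Ξ) :
    (∫⁻ t : ℝ, if 0 < t then
        ENNReal.ofReal (b * t) * (4 * ENNReal.ofReal (π * mfun Ξ K t)) else 0)
    = ENNReal.ofReal (π * b * heav (K - Ξ) * (1 - (Ξ / K) ^ 2)) := by
  have hpi := Real.pi_pos
  rcases eq_or_lt_of_le hΞ with hΞ0 | hΞpos
  · -- Ξ = 0
    subst hΞ0
    have hN : ∀ t : ℝ, (if 0 < t then
        ENNReal.ofReal (b * t) * (4 * ENNReal.ofReal (π * mfun 0 K t)) else 0)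
        = (Ioc (0:ℝ) 1).indicator (fun t => ENNReal.ofReal (4 * π * b * (t * (1 - t ^ 2)))) t := by
      intro t
      unfold mfun
      rw [if_pos rfl]
      by_cases ht : 0 < t
      · by_cases ht1 : t ≤ 1
        · rw [if_pos ht, Set.indicator_of_mem (Set.mem_Ioc.mpr ⟨ht, ht1⟩),
            show (4:ℝ≥0∞) = ENNReal.ofReal 4 by norm_num,
            ← ENNReal.ofReal_mul (by norm_num : (0:ℝ) ≤ 4),
            ← ENNReal.ofReal_mul (mul_nonneg hb.le ht.le)]
          congr 1
          ring
        · rw [if_pos ht, Set.indicator_of_notMem (fun hmem => ht1 hmem.2)]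
          have : ENNReal.ofReal (π * (1 - t ^ 2)) = 0 := by
            rw [ENNReal.ofReal_eq_zero]
            exact mul_nonpos_of_nonneg_of_nonpos hpi.le (by nlinarith [not_le.mp ht1])
          rw [this, mul_zero, mul_zero]
      · rw [if_neg ht, Set.indicator_of_notMem (fun hmem => ht hmem.1)]
    rw [lintegral_congr hN, lintegral_indicator measurableSet_Ioc,
      ← ofReal_integral_eq_lintegral_ofReal]
    · have hval : ∫ t in Ioc (0:ℝ) 1, 4 * π * b * (t * (1 - t ^ 2)) = π * b := by
        rw [← intervalIntegral.integral_of_le zero_le_one]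
        have hfe : ∀ t : ℝ, 4 * π * b * (t * (1 - t ^ 2))
            = (4 * π * b) * t - (4 * π * b) * t ^ 3 := by intro t; ring
        simp_rw [hfe]
        rw [intervalIntegral.integral_sub
          ((by fun_prop : Continuous fun t : ℝ => 4 * π * b * t).intervalIntegrable _ _)
          ((by fun_prop : Continuous fun t : ℝ => 4 * π * b * t ^ 3).intervalIntegrable _ _),
          intervalIntegral.integral_const_mul, intervalIntegral.integral_const_mul,
          integral_id, integral_pow]
        ring
      rw [hval, heav_of_nonneg (by linarith : (0:ℝ) ≤ K - 0)]
      norm_num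
    · exact (by fun_prop : Continuous fun t : ℝ =>
        4 * π * b * (t * (1 - t ^ 2))).integrableOn_Ioc
    · filter_upwards [ae_restrict_mem measurableSet_Ioc] with t ht
      have h1 := ht.1
      have h2 := ht.2
      have : 0 ≤ 1 - t ^ 2 := by nlinarith
      positivity
  rcases lt_or_ge K Ξ with hKΞ | hΞK
  · -- K < Ξ : everything vanishes
    have hN : ∀ t : ℝ, (if 0 < t then
        ENNReal.ofReal (b * t) * (4 * ENNReal.ofReal (π * mfun Ξ K t)) else 0) = 0 := by
      intro t
      split_ifs with ht
      · have hm : mfun Ξ K t ≤ (K / Ξ) ^ 2 * t ^ 2 - t ^ 2 := by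
          unfold mfun; rw [if_neg (ne_of_gt hΞpos)]; exact min_le_right _ _
        have hlt : (K / Ξ) ^ 2 * t ^ 2 - t ^ 2 < 0 := by
          have h1 : K / Ξ < 1 := (div_lt_one hΞpos).mpr hKΞ
          have h2 : 0 ≤ K / Ξ := by positivity
          nlinarith [mul_pos ht ht, mul_pos (sub_pos.mpr h1) (show (0:ℝ) < 1 + K / Ξ by linarith)]
        have : ENNReal.ofReal (π * mfun Ξ K t) = 0 := by
          rw [ENNReal.ofReal_eq_zero]; nlinarith
        rw [this, mul_zero, mul_zero]
      · rfl
    rw [lintegral_congr hN, lintegral_zero, Eq.comm, ENNReal.ofReal_eq_zero]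
    rw [heav_of_neg (by linarith)]
    nlinarith [sq_nonneg (Ξ / K)]
  · -- 0 < Ξ ≤ K
    set α : ℝ := Ξ / K with hαdef
    have hα0 : 0 < α := by positivity
    have hα1 : α ≤ 1 := (div_le_one hK).mpr hΞK
    have hq1 : 1 ≤ K / Ξ := (one_le_div hΞpos).mpr hΞK
    have hqα : (K / Ξ) * α = 1 := by
      rw [hαdef]; field_simp
    have hN : ∀ t : ℝ, (if 0 < t then
        ENNReal.ofReal (b * t) * (4 * ENNReal.ofReal (π * mfun Ξ K t)) else 0)
        = (Ioc (0:ℝ) α).indicator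
            (fun t => ENNReal.ofReal (4 * π * b * (((K / Ξ) ^ 2 - 1) * t ^ 3))) t
          + (Ioc α 1).indicator (fun t => ENNReal.ofReal (4 * π * b * (t * (1 - t ^ 2)))) t := by
      intro t
      unfold mfun
      rw [if_neg (ne_of_gt hΞpos)]
      by_cases ht : 0 < t
      · by_cases htα : t ≤ α
        · have hmin : min (1 - t ^ 2) ((K / Ξ) ^ 2 * t ^ 2 - t ^ 2)
              = (K / Ξ) ^ 2 * t ^ 2 - t ^ 2 := by
            apply min_eq_right
            have hqt : (K / Ξ) * t ≤ 1 := by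
              calc (K / Ξ) * t ≤ (K / Ξ) * α := by
                    apply mul_le_mul_of_nonneg_left htα (by positivity)
                _ = 1 := hqα
            nlinarith [mul_nonneg (by positivity : (0:ℝ) ≤ K / Ξ) ht.le]
          rw [if_pos ht, hmin, Set.indicator_of_mem (Set.mem_Ioc.mpr ⟨ht, htα⟩),
            Set.indicator_of_notMem (fun hmem => absurd hmem.1 (not_lt.mpr htα)), add_zero,
            show (4:ℝ≥0∞) = ENNReal.ofReal 4 by norm_num,
            ← ENNReal.ofReal_mul (by norm_num : (0:ℝ) ≤ 4),
            ← ENNReal.ofReal_mul (mul_nonneg hb.le ht.le)]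
          congr 1
          ring
        · push_neg at htα
          by_cases ht1 : t ≤ 1
          · have hmin : min (1 - t ^ 2) ((K / Ξ) ^ 2 * t ^ 2 - t ^ 2) = 1 - t ^ 2 := by
              apply min_eq_left
              have hqt : 1 ≤ (K / Ξ) * t := by
                calc (1:ℝ) = (K / Ξ) * α := hqα.symm
                _ ≤ (K / Ξ) * t := by
                    apply mul_le_mul_of_nonneg_left htα.le (by positivity)
              nlinarith [mul_nonneg (by positivity : (0:ℝ) ≤ K / Ξ) ht.le]
            rw [if_pos ht, hmin,
              Set.indicator_of_notMem (fun hmem => absurd htα (not_lt.mpr hmem.2)),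
              Set.indicator_of_mem (Set.mem_Ioc.mpr ⟨htα, ht1⟩), zero_add,
              show (4:ℝ≥0∞) = ENNReal.ofReal 4 by norm_num,
              ← ENNReal.ofReal_mul (by norm_num : (0:ℝ) ≤ 4),
              ← ENNReal.ofReal_mul (mul_nonneg hb.le ht.le)]
            congr 1
            ring
          · push_neg at ht1
            rw [if_pos ht,
              Set.indicator_of_notMem
                (fun hmem => absurd (Set.mem_Ioc.mp hmem).2
                  (not_le.mpr (lt_of_le_of_lt hα1 ht1))),
              Set.indicator_of_notMem
                (fun hmem => absurd (Set.mem_Ioc.mp hmem).2 (not_le.mpr ht1)), add_zero]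
            have : ENNReal.ofReal (π * min (1 - t ^ 2) ((K / Ξ) ^ 2 * t ^ 2 - t ^ 2)) = 0 := by
              rw [ENNReal.ofReal_eq_zero]
              have hle : min (1 - t ^ 2) ((K / Ξ) ^ 2 * t ^ 2 - t ^ 2) ≤ 1 - t ^ 2 :=
                min_le_left _ _
              exact mul_nonpos_of_nonneg_of_nonpos hpi.le (by nlinarith)
            rw [this, mul_zero, mul_zero]
      · rw [if_neg ht,
          Set.indicator_of_notMem (fun hmem => ht hmem.1),
          Set.indicator_of_notMem (fun hmem => ht (hα0.trans hmem.1)), add_zero]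
    rw [lintegral_congr hN]
    rw [lintegral_add_left ((by fun_prop : Measurable fun t : ℝ =>
        ENNReal.ofReal (4 * π * b * (((K / Ξ) ^ 2 - 1) * t ^ 3))).indicator measurableSet_Ioc)]
    rw [lintegral_indicator measurableSet_Ioc, lintegral_indicator measurableSet_Ioc]
    rw [← ofReal_integral_eq_lintegral_ofReal
        ((by fun_prop : Continuous fun t : ℝ =>
          4 * π * b * (((K / Ξ) ^ 2 - 1) * t ^ 3)).integrableOn_Ioc)
        (by
          filter_upwards [ae_restrict_mem measurableSet_Ioc] with t ht
          have h1 := ht.1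
          have hc : (0:ℝ) ≤ (K / Ξ) ^ 2 - 1 := by nlinarith
          positivity),
      ← ofReal_integral_eq_lintegral_ofReal
        ((by fun_prop : Continuous fun t : ℝ =>
          4 * π * b * (t * (1 - t ^ 2))).integrableOn_Ioc)
        (by
          filter_upwards [ae_restrict_mem measurableSet_Ioc] with t ht
          have h1 := hα0.trans ht.1
          have h2 := ht.2
          have : (0:ℝ) ≤ 1 - t ^ 2 := by nlinarith
          positivity)]
    have hI1 : ∫ t in Ioc (0:ℝ) α, 4 * π * b * (((K / Ξ) ^ 2 - 1) * t ^ 3)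
        = π * b * ((K / Ξ) ^ 2 - 1) * α ^ 4 := by
      rw [← intervalIntegral.integral_of_le hα0.le]
      have hfe : ∀ t : ℝ, 4 * π * b * (((K / Ξ) ^ 2 - 1) * t ^ 3)
          = (4 * π * b * ((K / Ξ) ^ 2 - 1)) * t ^ 3 := by intro t; ring
      simp_rw [hfe]
      rw [intervalIntegral.integral_const_mul, integral_pow]
      ring
    have hI2 : ∫ t in Ioc α 1, 4 * π * b * (t * (1 - t ^ 2))
        = π * b * (1 - 2 * α ^ 2 + α ^ 4) := by
      rw [← intervalIntegral.integral_of_le hα1]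
      have hfe : ∀ t : ℝ, 4 * π * b * (t * (1 - t ^ 2))
          = (4 * π * b) * t - (4 * π * b) * t ^ 3 := by intro t; ring
      simp_rw [hfe]
      rw [intervalIntegral.integral_sub
        ((by fun_prop : Continuous fun t : ℝ => 4 * π * b * t).intervalIntegrable _ _)
        ((by fun_prop : Continuous fun t : ℝ => 4 * π * b * t ^ 3).intervalIntegrable _ _),
        intervalIntegral.integral_const_mul, intervalIntegral.integral_const_mul,
        integral_id, integral_pow]
      ring
    have hnn1 : (0:ℝ) ≤ π * b * ((K / Ξ) ^ 2 - 1) * α ^ 4 := by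
      have hc : (0:ℝ) ≤ (K / Ξ) ^ 2 - 1 := by nlinarith
      have : (0:ℝ) ≤ α ^ 4 := by positivity
      exact mul_nonneg (mul_nonneg (mul_nonneg hpi.le hb.le) hc) this
    have hnn2 : (0:ℝ) ≤ π * b * (1 - 2 * α ^ 2 + α ^ 4) := by
      have h14 : (0:ℝ) ≤ 1 - 2 * α ^ 2 + α ^ 4 := by nlinarith [sq_nonneg (1 - α ^ 2)]
      exact mul_nonneg (mul_nonneg hpi.le hb.le) h14
    rw [hI1, hI2, ← ENNReal.ofReal_add hnn1 hnn2]
    rw [heav_of_nonneg (by linarith : (0:ℝ) ≤ K - Ξ)]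
    congr 1
    have hΞne : Ξ ≠ 0 := ne_of_gt hΞpos
    have hKne : K ≠ 0 := ne_of_gt hK
    rw [hαdef]
    field_simp
    ring

lemma measurable_inner_w (w : E3) : Measurable fun x : E3 => ⟪x, w⟫ :=
  (Continuous.inner continuous_id continuous_const).measurable

lemma measurable_Fv (w : E3) (Ξ c0 : ℝ) : Measurable fun x : E3 =>
    (if 0 < ⟪x, w⟫ then heav (c0 * ⟪x, w⟫ - Ξ * ‖x‖) * ⟪x, w⟫ else 0) := by
  refine Measurable.ite (measurableSet_lt measurable_const (measurable_inner_w w)) ?_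
    measurable_const
  exact ((measurable_heav.comp (by
    exact ((measurable_const.mul (measurable_inner_w w)).sub
      (measurable_const.mul measurable_norm)))).mul (measurable_inner_w w))

lemma measurable_Fs (w : E3) (Ξ c0 : ℝ) : Measurable fun x : E3 =>
    (if 0 < ⟪x, w⟫ then heav (c0 * ⟪x, w⟫ - Ξ) * ⟪x, w⟫ else 0) := by
  refine Measurable.ite (measurableSet_lt measurable_const (measurable_inner_w w)) ?_
    measurable_const
  exact ((measurable_heav.comp (by
    exact ((measurable_const.mul (measurable_inner_w w)).sub measurable_const))).mul
      (measurable_inner_w w))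

lemma sphere_lintegral (w : E3) (hw : w ≠ 0) (Ξ c0 : ℝ) (hΞ : 0 ≤ Ξ) (hc0 : 0 < c0) :
    (∫⁻ ε : sphere (0:E3) 1, ENNReal.ofReal
        (if 0 < ⟪(ε:E3), w⟫ then heav (c0 * ⟪(ε:E3), w⟫ - Ξ) * ⟪(ε:E3), w⟫ else 0)
        ∂(volume : Measure E3).toSphere)
    = ENNReal.ofReal (π * ‖w‖ * heav (c0 * ‖w‖ - Ξ)
        * (1 - (Ξ / (c0 * ‖w‖)) ^ 2)) := by
  have hb : 0 < ‖w‖ := norm_pos_iff.mpr hw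
  set b : ℝ := ‖w‖ with hbdef
  set K : ℝ := c0 * b with hKdef
  have hK : 0 < K := mul_pos hc0 hb
  set Gv : E3 → ℝ≥0∞ := fun x =>
    ENNReal.ofReal (if 0 < ⟪x, w⟫ then heav (c0 * ⟪x, w⟫ - Ξ * ‖x‖) * ⟪x, w⟫ else 0)
      * radW ‖x‖ with hGvdef
  have hGv : Measurable Gv :=
    (ENNReal.measurable_ofReal.comp (measurable_Fv w Ξ c0)).mul
      (measurable_radW.comp measurable_norm)
  -- Step 1 : polar decomposition
  have hstep1 : ∫⁻ x, Gv x ∂(volume : Measure E3)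
      = ∫⁻ ε : sphere (0:E3) 1, ENNReal.ofReal
          (if 0 < ⟪(ε:E3), w⟫ then heav (c0 * ⟪(ε:E3), w⟫ - Ξ) * ⟪(ε:E3), w⟫ else 0)
          ∂(volume : Measure E3).toSphere := by
    rw [polar3 Gv hGv]
    have hhom : ∀ p : sphere (0:E3) 1 × Ioi (0:ℝ), Gv (p.2.1 • p.1.1)
        = ENNReal.ofReal (if 0 < ⟪(p.1 : E3), w⟫ then
            heav (c0 * ⟪(p.1:E3), w⟫ - Ξ) * ⟪(p.1:E3), w⟫ else 0)
          * (ENNReal.ofReal p.2.1 * radW p.2.1) := by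
      rintro ⟨ε, r⟩
      have hr : (0:ℝ) < r.1 := r.2
      have hε : ‖(ε:E3)‖ = 1 := mem_sphere_zero_iff_norm.mp ε.2
      have hnorm : ‖r.1 • (ε:E3)‖ = r.1 := by
        rw [norm_smul, hε, mul_one, Real.norm_eq_abs, abs_of_pos hr]
      have hip : ⟪r.1 • (ε:E3), w⟫ = r.1 * ⟪(ε:E3), w⟫ := real_inner_smul_left _ _ _
      simp only [hGvdef, hnorm, hip]
      by_cases ht : 0 < ⟪(ε:E3), w⟫
      · rw [if_pos (mul_pos hr ht), if_pos ht,
          show c0 * (r.1 * ⟪(ε:E3), w⟫) - Ξ * r.1 = r.1 * (c0 * ⟪(ε:E3), w⟫ - Ξ) by ring,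
          heav_mul_pos hr,
          show heav (c0 * ⟪(ε:E3), w⟫ - Ξ) * (r.1 * ⟪(ε:E3), w⟫)
            = (heav (c0 * ⟪(ε:E3), w⟫ - Ξ) * ⟪(ε:E3), w⟫) * r.1 by ring,
          ENNReal.ofReal_mul (mul_nonneg (heav_nonneg _) ht.le)]
        ring
      · have hts : r.1 * ⟪(ε:E3), w⟫ ≤ 0 :=
          mul_nonpos_of_nonneg_of_nonpos hr.le (not_lt.mp ht)
        rw [if_neg (not_lt.mpr hts), if_neg ht]
        simp
    have ham1 : AEMeasurable (fun ε : sphere (0:E3) 1 => ENNReal.ofReal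
        (if 0 < ⟪(ε:E3), w⟫ then heav (c0 * ⟪(ε:E3), w⟫ - Ξ) * ⟪(ε:E3), w⟫ else 0))
        (volume : Measure E3).toSphere :=
      (ENNReal.measurable_ofReal.comp
        ((measurable_Fs w Ξ c0).comp measurable_subtype_coe)).aemeasurable
    have ham2 : AEMeasurable (fun r : Ioi (0:ℝ) => ENNReal.ofReal r.1 * radW r.1)
        (Measure.volumeIoiPow 2) :=
      ((ENNReal.measurable_ofReal.comp measurable_subtype_coe).mul
        (measurable_radW.comp measurable_subtype_coe)).aemeasurable
    rw [lintegral_congr hhom, lintegral_prod_mul ham1 ham2]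
    rw [lintegral_volumeIoiPow 2 (fun s => ENNReal.ofReal s * radW s)
      (ENNReal.measurable_ofReal.mul measurable_radW), radW_norm, mul_one]
  rw [← hstep1]
  -- Step 2 : rotation
  set u : E3 := b⁻¹ • w with hudef
  have hu : ‖u‖ = 1 := norm_smul_inv_norm hw
  set e0 : E3 := EuclideanSpace.single 0 1 with he0def
  have he0 : ‖e0‖ = 1 := by simp [he0def, EuclideanSpace.norm_single]
  set T := Submodule.reflection (ℝ ∙ (e0 - u))ᗮ with hTdef
  have hTe0 : T e0 = u := Submodule.reflection_sub (by rw [he0, hu])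
  have hTip : ∀ x : E3, ⟪T x, w⟫ = b * x 0 := by
    intro x
    have hw' : b • u = w := by
      rw [hudef]; exact smul_inv_smul₀ (ne_of_gt hb) w
    calc ⟪T x, w⟫ = ⟪T x, b • u⟫ := by rw [hw']
      _ = b * ⟪T x, u⟫ := real_inner_smul_right _ _ _
      _ = b * ⟪T x, T e0⟫ := by rw [hTe0]
      _ = b * ⟪x, e0⟫ := by rw [LinearIsometryEquiv.inner_map_map]
      _ = b * x 0 := by
          rw [he0def, EuclideanSpace.inner_single_right]
          simp
  have hrot : ∫⁻ x, Gv x ∂(volume : Measure E3) = ∫⁻ x, Gv (T x) ∂(volume : Measure E3) :=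
    (T.measurePreserving.lintegral_comp hGv).symm
  set Hv : E3 → ℝ≥0∞ := fun x =>
    ENNReal.ofReal (if 0 < b * x 0 then heav (K * x 0 - Ξ * ‖x‖) * (b * x 0) else 0)
      * radW ‖x‖ with hHvdef
  have hGvT : ∀ x : E3, Gv (T x) = Hv x := by
    intro x
    simp only [hGvdef, hHvdef, hTip x, T.norm_map,
      show c0 * (b * x 0) = K * x 0 by rw [hKdef]; ring]
  have hHm : Measurable Hv := by
    have h0 : Measurable fun x : E3 => x 0 := by
      fun_prop
    refine Measurable.mul (ENNReal.measurable_ofReal.comp ?_)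
      (measurable_radW.comp measurable_norm)
    refine Measurable.ite (measurableSet_lt measurable_const
      (measurable_const.mul h0)) ?_ measurable_const
    exact (measurable_heav.comp ((measurable_const.mul h0).sub
      (measurable_const.mul measurable_norm))).mul (measurable_const.mul h0)
  rw [hrot, lintegral_congr hGvT]
  -- Step 3 : transfer to the product coordinates
  have hmp : MeasurePreserving ((MeasurableEquiv.toLp 2 (Fin 3 → ℝ)))
      (volume : Measure (Fin 3 → ℝ)) (volume : Measure E3) :=
    (EuclideanSpace.volume_preserving_symm_measurableEquiv_toLp (Fin 3)).symm
  have hcoord := (hmp.lintegral_comp hHm).symm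
  rw [hcoord]
  have hesymm : ∀ y : Fin 3 → ℝ, Hv ((MeasurableEquiv.toLp 2 (Fin 3 → ℝ)) y)
      = ENNReal.ofReal (if 0 < b * y 0 then
          heav (K * y 0 - Ξ * Real.sqrt (∑ i, y i ^ 2)) * (b * y 0) else 0)
        * radW (Real.sqrt (∑ i, y i ^ 2)) := by
    intro y
    have hny : ‖((MeasurableEquiv.toLp 2 (Fin 3 → ℝ)) y : E3)‖
        = Real.sqrt (∑ i, y i ^ 2) := by
      rw [EuclideanSpace.norm_eq]
      simp [sq_abs]
    have h0y : ((MeasurableEquiv.toLp 2 (Fin 3 → ℝ)) y : E3) 0 = y 0 := rfl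
    simp only [hHvdef, hny, h0y]
  rw [lintegral_congr hesymm]
  -- Step 4 : split off the first coordinate
  have hsqm : Measurable fun y : Fin 3 → ℝ => Real.sqrt (∑ i, y i ^ 2) := by fun_prop
  have hPm : Measurable fun y : Fin 3 → ℝ =>
      ENNReal.ofReal (if 0 < b * y 0 then
        heav (K * y 0 - Ξ * Real.sqrt (∑ i, y i ^ 2)) * (b * y 0) else 0)
      * radW (Real.sqrt (∑ i, y i ^ 2)) := by
    refine Measurable.mul (ENNReal.measurable_ofReal.comp ?_) (measurable_radW.comp hsqm)
    refine Measurable.ite (measurableSet_lt measurable_const (by fun_prop)) ?_ measurable_const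
    exact (measurable_heav.comp (by fun_prop)).mul (by fun_prop)
  have hpe : MeasurePreserving (MeasurableEquiv.piFinSuccAbove (fun _ : Fin 3 => ℝ) 0)
      (volume : Measure (Fin 3 → ℝ))
      ((volume : Measure ℝ).prod (volume : Measure (Fin 2 → ℝ))) := by
    simpa [volume_pi] using
      measurePreserving_piFinSuccAbove (fun _ : Fin 3 => (volume : Measure ℝ)) 0
  have hpe' : MeasurePreserving (MeasurableEquiv.piFinSuccAbove (fun _ : Fin 3 => ℝ) 0).symm
      ((volume : Measure ℝ).prod (volume : Measure (Fin 2 → ℝ)))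
      (volume : Measure (Fin 3 → ℝ)) := hpe.symm
  rw [← hpe'.lintegral_comp hPm]
  have hsymmp : ∀ p : ℝ × (Fin 2 → ℝ),
      (ENNReal.ofReal (if 0 < b * ((MeasurableEquiv.piFinSuccAbove (fun _ : Fin 3 => ℝ) 0).symm p) 0 then
        heav (K * ((MeasurableEquiv.piFinSuccAbove (fun _ : Fin 3 => ℝ) 0).symm p) 0
          - Ξ * Real.sqrt (∑ i, ((MeasurableEquiv.piFinSuccAbove (fun _ : Fin 3 => ℝ) 0).symm p) i ^ 2))
          * (b * ((MeasurableEquiv.piFinSuccAbove (fun _ : Fin 3 => ℝ) 0).symm p) 0) else 0)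
      * radW (Real.sqrt (∑ i, ((MeasurableEquiv.piFinSuccAbove (fun _ : Fin 3 => ℝ) 0).symm p) i ^ 2)))
      = ENNReal.ofReal (if 0 < b * p.1 then
          heav (K * p.1 - Ξ * Real.sqrt (p.1 ^ 2 + (p.2 0 ^ 2 + p.2 1 ^ 2))) * (b * p.1) else 0)
        * radW (Real.sqrt (p.1 ^ 2 + (p.2 0 ^ 2 + p.2 1 ^ 2))) := by
    intro p
    have hps : (MeasurableEquiv.piFinSuccAbove (fun _ : Fin 3 => ℝ) 0).symm p
        = Fin.cons p.1 p.2 := by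
      simp [MeasurableEquiv.piFinSuccAbove]
      rfl
    rw [hps]
    have h0 : Fin.cons (α := fun _ : Fin 3 => ℝ) p.1 p.2 0 = p.1 := rfl
    have hsum : ∑ i, (Fin.cons (α := fun _ : Fin 3 => ℝ) p.1 p.2 i) ^ 2
        = p.1 ^ 2 + (p.2 0 ^ 2 + p.2 1 ^ 2) := by
      rw [Fin.sum_univ_succ]
      simp [Fin.sum_univ_two]
    rw [h0, hsum]
  rw [lintegral_congr hsymmp]
  -- Step 5 : Tonelli
  have hQm : Measurable fun p : ℝ × (Fin 2 → ℝ) =>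
      ENNReal.ofReal (if 0 < b * p.1 then
          heav (K * p.1 - Ξ * Real.sqrt (p.1 ^ 2 + (p.2 0 ^ 2 + p.2 1 ^ 2))) * (b * p.1) else 0)
        * radW (Real.sqrt (p.1 ^ 2 + (p.2 0 ^ 2 + p.2 1 ^ 2))) := by
    have hsq : Measurable fun p : ℝ × (Fin 2 → ℝ) =>
        Real.sqrt (p.1 ^ 2 + (p.2 0 ^ 2 + p.2 1 ^ 2)) := by fun_prop
    refine Measurable.mul (ENNReal.measurable_ofReal.comp ?_) (measurable_radW.comp hsq)
    refine Measurable.ite (measurableSet_lt measurable_const (by fun_prop)) ?_ measurable_const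
    exact (measurable_heav.comp (by fun_prop)).mul (by fun_prop)
  rw [lintegral_prod _ hQm.aemeasurable]
  -- Step 6 : inner integral
  have hinner_eval : ∀ t : ℝ, (∫⁻ z : Fin 2 → ℝ,
      ENNReal.ofReal (if 0 < b * t then
          heav (K * t - Ξ * Real.sqrt (t ^ 2 + (z 0 ^ 2 + z 1 ^ 2))) * (b * t) else 0)
        * radW (Real.sqrt (t ^ 2 + (z 0 ^ 2 + z 1 ^ 2))))
      = if 0 < t then ENNReal.ofReal (b * t) * (4 * ENNReal.ofReal (π * mfun Ξ K t)) else 0 :=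
    fun t => inner_eval b K Ξ t hb hK hΞ
  rw [lintegral_congr hinner_eval]
  -- Step 7 : outer integral
  exact outer_eval b K Ξ hb hK hΞ




end AngularAux

open Set Metric Real in
/-- Angular integral over the collision hemisphere:
`∫_{⟨ε,w⟩>0} Θ(c₀⟨ε,w⟩ − Ξ)⟨ε,w⟩ dε = π‖w‖ Θ(‖w‖ − Ξ/c₀)(1 − (Ξ/(c₀‖w‖))²)`. -/
theorem angular_integral_over_hemisphere
    (w : E3) (hw : w ≠ 0) (Ξ : ℝ) (hΞ : 0 ≤ Ξ) (c0 : ℝ) (hc0 : 0 < c0) :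
    (∫ ε in {ε : E3 | 0 < ⟪ε, w⟫}, heav (c0 * ⟪ε, w⟫ - Ξ) * ⟪ε, w⟫ ∂sphMeasure)
    = Real.pi * ‖w‖ * heav (‖w‖ - Ξ / c0) * (1 - (Ξ / (c0 * ‖w‖)) ^ 2) := by
  have hb : 0 < ‖w‖ := norm_pos_iff.mpr hw
  -- rewrite the set integral as a lower integral on the sphere
  have hS : MeasurableSet {ε : E3 | 0 < ⟪ε, w⟫} :=
    (isOpen_lt continuous_const (Continuous.inner continuous_id continuous_const)).measurableSet
  have hemb : MeasurableEmbedding (Subtype.val : sphere (0:E3) 1 → E3) :=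
    MeasurableEmbedding.subtype_coe (isClosed_sphere).measurableSet
  rw [sphMeasure, hemb.restrict_map, hemb.integral_map,
    ← integral_indicator (hS.preimage hemb.measurable)]
  have heq : (fun ε : sphere (0:E3) 1 =>
      Set.indicator (Subtype.val ⁻¹' {ε : E3 | 0 < ⟪ε, w⟫})
        (fun ε => heav (c0 * ⟪(ε:E3), w⟫ - Ξ) * ⟪(ε:E3), w⟫) ε)
      = fun ε : sphere (0:E3) 1 =>
        (if 0 < ⟪(ε:E3), w⟫ then heav (c0 * ⟪(ε:E3), w⟫ - Ξ) * ⟪(ε:E3), w⟫ else 0) := by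
    ext ε; simp [Set.indicator, mem_setOf_eq]
  rw [heq, integral_eq_lintegral_of_nonneg_ae]
  · rw [sphere_lintegral w hw Ξ c0 hΞ hc0]
    have hheav : heav (‖w‖ - Ξ / c0) = heav (c0 * ‖w‖ - Ξ) := by
      rw [show ‖w‖ - Ξ / c0 = c0⁻¹ * (c0 * ‖w‖ - Ξ) by field_simp,
        heav_mul_pos (inv_pos.mpr hc0)]
    rw [hheav]
    apply ENNReal.toReal_ofReal
    rcases lt_or_ge (c0 * ‖w‖ - Ξ) 0 with h | h
    · rw [heav_of_neg h, mul_zero, zero_mul]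
    · rw [heav_of_nonneg h, mul_one]
      have h1 : Ξ / (c0 * ‖w‖) ≤ 1 := by
        rw [div_le_one (by positivity)]; linarith
      have h2 : 0 ≤ Ξ / (c0 * ‖w‖) := by positivity
      have : (Ξ / (c0 * ‖w‖)) ^ 2 ≤ 1 := by nlinarith
      have hπ := Real.pi_pos
      have : (0:ℝ) ≤ 1 - (Ξ / (c0 * ‖w‖)) ^ 2 := by linarith
      positivity
  · refine Filter.Eventually.of_forall fun ε => ?_
    dsimp only
    split_ifs with h
    · exact mul_nonneg (heav_nonneg _) h.le
    · rfl
  · exact ((measurable_Fs w Ξ c0).comp hemb.measurable).aestronglyMeasurable
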